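/- Let p > 1, g(u) = u|u|^{p-1}, and T > 0. Suppose φ : [0,T] × [0,1] → ℝ is twice continuously differentiable and satisfies φ(t,0) = φ(t,1) = 0 for all t ∈ [0,T]. Then for every T' ∈ [0,T], (1/2) ∫₀^{T'} ∫₀¹ ( ∂_t φ(t,x) − ∂²_{xx} φ(t,x) − g(φ(t,x)) )² dx dt ≥ 2 ( S(φ(T',·)) − S(φ(0,·)) ); consequently the rate (1/2) ∫₀^{T} ∫₀¹ ( ∂_t φ − ∂²_{xx} φ − g(φ) )² is at least 2 sup_{0 ≤ T' ≤ T} ( S(φ(T',·)) − S(φ(0,·)) ). -/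

import Mathlib

open Set MeasureTheory intervalIntegral

/-- The potential `S(v) = ∫₀¹ ((1/2) v'(x)² − |v(x)|^{p+1}/(p+1)) dx`. -/
noncomputable def potS (p : ℝ) (v : ℝ → ℝ) : ℝ :=
  ∫ x in (0:ℝ)..1, ((1/2) * (deriv v x) ^ 2 - |v x| ^ (p + 1) / (p + 1))

noncomputable def pA (φ : ℝ → ℝ → ℝ) (t x : ℝ) : ℝ :=
  fderiv ℝ (fun q : ℝ × ℝ => φ q.1 q.2) (t, x) (1, 0)
noncomputable def pB (φ : ℝ → ℝ → ℝ) (t x : ℝ) : ℝ :=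
  fderiv ℝ (fun q : ℝ × ℝ => φ q.1 q.2) (t, x) (0, 1)
noncomputable def pC (φ : ℝ → ℝ → ℝ) (t x : ℝ) : ℝ :=
  fderiv ℝ (fderiv ℝ (fun q : ℝ × ℝ => φ q.1 q.2)) (t, x) (0, 1) (0, 1)
noncomputable def pM (φ : ℝ → ℝ → ℝ) (t x : ℝ) : ℝ :=
  fderiv ℝ (fderiv ℝ (fun q : ℝ × ℝ => φ q.1 q.2)) (t, x) (1, 0) (0, 1)

section aux
variable {φ : ℝ → ℝ → ℝ} (hφ : ContDiff ℝ 2 (fun q : ℝ × ℝ => φ q.1 q.2))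
include hφ

lemma hderiv_t (t x : ℝ) : HasDerivAt (fun s => φ s x) (pA φ t x) t := by
  have h := ((hφ.differentiable (by norm_num)) (t, x)).hasFDerivAt
  exact h.comp_hasDerivAt t ((hasDerivAt_id t).prodMk (hasDerivAt_const t x))

lemma hderiv_x (t x : ℝ) : HasDerivAt (φ t) (pB φ t x) x := by
  have h := ((hφ.differentiable (by norm_num)) (t, x)).hasFDerivAt
  exact h.comp_hasDerivAt x ((hasDerivAt_const x t).prodMk (hasDerivAt_id x))

lemma hD1 : ContDiff ℝ 1 (fderiv ℝ (fun q : ℝ × ℝ => φ q.1 q.2)) :=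
  hφ.fderiv_right (by norm_num)

lemma hderiv_Bx (t x : ℝ) : HasDerivAt (fun y => pB φ t y) (pC φ t x) x := by
  have h := (((hD1 hφ).differentiable one_ne_zero) (t, x)).hasFDerivAt
  have h2 := h.comp_hasDerivAt x ((hasDerivAt_const x t).prodMk (hasDerivAt_id x))
  have h3 := h2.clm_apply (hasDerivAt_const x ((0:ℝ), (1:ℝ)))
  simpa [pB, pC] using h3

lemma hderiv_Bt (t x : ℝ) : HasDerivAt (fun s => pB φ s x) (pM φ t x) t := by
  have h := (((hD1 hφ).differentiable one_ne_zero) (t, x)).hasFDerivAt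
  have h2 := h.comp_hasDerivAt t ((hasDerivAt_id t).prodMk (hasDerivAt_const t x))
  have h3 := h2.clm_apply (hasDerivAt_const t ((0:ℝ), (1:ℝ)))
  simpa [pB, pM] using h3

lemma hderiv_Ax (t x : ℝ) : HasDerivAt (fun y => pA φ t y) (pM φ t x) x := by
  have h := (((hD1 hφ).differentiable one_ne_zero) (t, x)).hasFDerivAt
  have h2 := h.comp_hasDerivAt x ((hasDerivAt_const x t).prodMk (hasDerivAt_id x))
  have h3 := h2.clm_apply (hasDerivAt_const x ((1:ℝ), (0:ℝ)))
  have hsym := (hφ.contDiffAt (x := (t, x))).isSymmSndFDerivAt (by rw [minSmoothness_of_isRCLikeNormedField])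
  have := hsym (0, 1) (1, 0)
  simpa [pA, pM, this] using h3

lemma cA : Continuous fun q : ℝ × ℝ => pA φ q.1 q.2 := by
  have := (hφ.continuous_fderiv (by norm_num)).clm_apply
    (continuous_const : Continuous fun _ : ℝ × ℝ => ((1:ℝ), (0:ℝ)))
  simpa [pA] using this

lemma cB : Continuous fun q : ℝ × ℝ => pB φ q.1 q.2 := by
  have := (hφ.continuous_fderiv (by norm_num)).clm_apply
    (continuous_const : Continuous fun _ : ℝ × ℝ => ((0:ℝ), (1:ℝ)))
  simpa [pB] using this

lemma cC : Continuous fun q : ℝ × ℝ => pC φ q.1 q.2 := by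
  have h := ((hD1 hφ).continuous_fderiv one_ne_zero).clm_apply
    (continuous_const : Continuous fun _ : ℝ × ℝ => ((0:ℝ), (1:ℝ)))
  have := h.clm_apply (continuous_const : Continuous fun _ : ℝ × ℝ => ((0:ℝ), (1:ℝ)))
  simpa [pC] using this

lemma cM : Continuous fun q : ℝ × ℝ => pM φ q.1 q.2 := by
  have h := ((hD1 hφ).continuous_fderiv one_ne_zero).clm_apply
    (continuous_const : Continuous fun _ : ℝ × ℝ => ((1:ℝ), (0:ℝ)))
  have := h.clm_apply (continuous_const : Continuous fun _ : ℝ × ℝ => ((0:ℝ), (1:ℝ)))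
  simpa [pM] using this

end aux

theorem stmt3_key (p T : ℝ) (hp : 1 < p) (hT : 0 < T) (φ : ℝ → ℝ → ℝ)
    (hφ : ContDiff ℝ 2 (fun q : ℝ × ℝ => φ q.1 q.2))
    (hbc : ∀ t ∈ Icc (0:ℝ) T, φ t 0 = 0 ∧ φ t 1 = 0)
    (T' : ℝ) (hT' : T' ∈ Icc (0:ℝ) T) :
    potS p (φ T') - potS p (φ 0) ≤
      (1/4) * ∫ t in (0:ℝ)..T', ∫ x in (0:ℝ)..1,
        (pA φ t x - (pC φ t x + φ t x * |φ t x| ^ (p - 1))) ^ 2 := by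
  have hT'0 : 0 ≤ T' := hT'.1
  have hp1 : (1:ℝ) < p + 1 := by linarith
  -- continuity facts
  have cφ : Continuous fun q : ℝ × ℝ => φ q.1 q.2 := hφ.continuous
  have cg : Continuous fun q : ℝ × ℝ => φ q.1 q.2 * |φ q.1 q.2| ^ (p - 1) :=
    cφ.mul ((cφ.abs).rpow_const fun q => Or.inr (by linarith))
  have ck : Continuous fun q : ℝ × ℝ =>
      pB φ q.1 q.2 * pM φ q.1 q.2 - φ q.1 q.2 * |φ q.1 q.2| ^ (p - 1) * pA φ q.1 q.2 :=
    ((cB hφ).mul (cM hφ)).sub (cg.mul (cA hφ))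
  have csq : Continuous fun q : ℝ × ℝ =>
      (pA φ q.1 q.2 - (pC φ q.1 q.2 + φ q.1 q.2 * |φ q.1 q.2| ^ (p - 1))) ^ 2 :=
    (((cA hφ).sub ((cC hφ).add cg)).pow 2)
  have slicet : ∀ {f : ℝ × ℝ → ℝ}, Continuous f → ∀ t : ℝ, Continuous fun x => f (t, x) :=
    fun hf t => hf.comp (continuous_const.prodMk continuous_id)
  have slicex : ∀ {f : ℝ × ℝ → ℝ}, Continuous f → ∀ x : ℝ, Continuous fun t => f (t, x) :=
    fun hf x => hf.comp (continuous_id.prodMk continuous_const)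
  have ch : Continuous fun q : ℝ × ℝ =>
      (1/2) * (pB φ q.1 q.2) ^ 2 - |φ q.1 q.2| ^ (p + 1) / (p + 1) :=
    ((continuous_const.mul ((cB hφ).pow 2)).sub
      (((cφ.abs).rpow_const fun q => Or.inr (by linarith)).div_const (p + 1)))
  -- potS as integral of pB
  have hBeq : ∀ t : ℝ, deriv (φ t) = fun x => pB φ t x :=
    fun t => funext fun x => (hderiv_x hφ t x).deriv
  have hpot : ∀ t : ℝ, potS p (φ t)
      = ∫ x in (0:ℝ)..1, ((1/2) * (pB φ t x) ^ 2 - |φ t x| ^ (p + 1) / (p + 1)) := by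
    intro t; simp only [potS, hBeq]
  -- Step 1 : FTC in t for each x
  have step1 : ∀ x : ℝ,
      ((1/2) * (pB φ T' x) ^ 2 - |φ T' x| ^ (p + 1) / (p + 1))
        - ((1/2) * (pB φ 0 x) ^ 2 - |φ 0 x| ^ (p + 1) / (p + 1))
      = ∫ t in (0:ℝ)..T',
          (pB φ t x * pM φ t x - φ t x * |φ t x| ^ (p - 1) * pA φ t x) := by
    intro x
    refine (intervalIntegral.integral_eq_sub_of_hasDerivAt
      (f := fun t => (1/2) * (pB φ t x) ^ 2 - |φ t x| ^ (p + 1) / (p + 1))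
      (fun t _ => ?_) ?_).symm
    · have d1 := hderiv_Bt hφ t x
      have d2 := hderiv_t hφ t x
      have d3 := (hasDerivAt_abs_rpow (φ t x) hp1).comp t d2
      have d4 := ((d1.pow 2).const_mul (1/2 : ℝ)).sub (d3.div_const (p + 1))
      convert d4 using 1
      · rfl
      have hne : p + 1 ≠ 0 := by linarith
      have he : p + 1 - 2 = p - 1 := by ring
      rw [he]; field_simp; ring
    · exact (slicex ck x).intervalIntegrable _ _
  -- Step 2 : potS difference as double integral
  have step2 : potS p (φ T') - potS p (φ 0)
      = ∫ x in (0:ℝ)..1, ∫ t in (0:ℝ)..T',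
          (pB φ t x * pM φ t x - φ t x * |φ t x| ^ (p - 1) * pA φ t x) := by
    rw [hpot T', hpot 0, ← intervalIntegral.integral_sub
      ((slicet ch T').intervalIntegrable _ _) ((slicet ch 0).intervalIntegrable _ _)]
    exact intervalIntegral.integral_congr fun x _ => step1 x
  -- Step 3 : Fubini
  have step3 : (∫ x in (0:ℝ)..1, ∫ t in (0:ℝ)..T',
          (pB φ t x * pM φ t x - φ t x * |φ t x| ^ (p - 1) * pA φ t x))
      = ∫ t in (0:ℝ)..T', ∫ x in (0:ℝ)..1,
          (pB φ t x * pM φ t x - φ t x * |φ t x| ^ (p - 1) * pA φ t x) := by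
    rw [intervalIntegral.integral_of_le hT'0, intervalIntegral.integral_of_le (zero_le_one' ℝ)]
    simp_rw [intervalIntegral.integral_of_le hT'0,
      intervalIntegral.integral_of_le (zero_le_one' ℝ)]
    apply MeasureTheory.integral_integral_swap
    rw [Function.uncurry_def, Measure.prod_restrict, ← Measure.volume_eq_prod]
    apply MeasureTheory.IntegrableOn.mono_set
      (t := Icc (0:ℝ) 1 ×ˢ Icc (0:ℝ) T')
    · exact ContinuousOn.integrableOn_compact (isCompact_Icc.prod isCompact_Icc)
        (ck.comp (continuous_snd.prodMk continuous_fst)).continuousOn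
    · exact prod_mono Ioc_subset_Icc_self Ioc_subset_Icc_self
  -- Step 4 : per-time inequality on the interior
  have step4 : ∀ t ∈ Ioo (0:ℝ) T',
      (∫ x in (0:ℝ)..1,
        (pB φ t x * pM φ t x - φ t x * |φ t x| ^ (p - 1) * pA φ t x))
      ≤ (1/4) * ∫ x in (0:ℝ)..1,
        (pA φ t x - (pC φ t x + φ t x * |φ t x| ^ (p - 1))) ^ 2 := by
    intro t ht
    have htT : t ∈ Ioo (0:ℝ) T := ⟨ht.1, lt_of_lt_of_le ht.2 hT'.2⟩
    have hb : ∀ y : ℝ, (∀ s ∈ Icc (0:ℝ) T, φ s y = 0) → pA φ t y = 0 := by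
      intro y hy
      have h1 := hderiv_t hφ t y
      have h2 : HasDerivAt (fun s => φ s y) 0 t := by
        apply (hasDerivAt_const t (0:ℝ)).congr_of_eventuallyEq
        filter_upwards [Ioo_mem_nhds htT.1 htT.2] with s hs
        exact hy s ⟨le_of_lt hs.1, le_of_lt hs.2⟩
      exact h1.unique h2
    have hbd0 : pA φ t 0 = 0 := hb 0 fun s hs => (hbc s hs).1
    have hbd1 : pA φ t 1 = 0 := hb 1 fun s hs => (hbc s hs).2
    have ibp : (∫ x in (0:ℝ)..1, pB φ t x * pM φ t x)
        = pB φ t 1 * pA φ t 1 - pB φ t 0 * pA φ t 0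
          - ∫ x in (0:ℝ)..1, pC φ t x * pA φ t x := by
      exact intervalIntegral.integral_mul_deriv_eq_deriv_mul
        (u := fun x => pB φ t x) (v := fun x => pA φ t x)
        (u' := fun x => pC φ t x) (v' := fun x => pM φ t x)
        (fun x _ => hderiv_Bx hφ t x) (fun x _ => hderiv_Ax hφ t x)
        ((slicet (cC hφ) t).intervalIntegrable _ _)
        ((slicet (cM hφ) t).intervalIntegrable _ _)
    have intCA : IntervalIntegrable (fun x => pC φ t x * pA φ t x) volume 0 1 := ((slicet (cC hφ) t).mul (slicet (cA hφ) t)).intervalIntegrable (μ := volume) (0:ℝ) 1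
    have intgA : IntervalIntegrable (fun x => φ t x * |φ t x| ^ (p - 1) * pA φ t x) volume 0 1 := ((slicet cg t).mul (slicet (cA hφ) t)).intervalIntegrable (μ := volume) (0:ℝ) 1
    have intBM : IntervalIntegrable (fun x => pB φ t x * pM φ t x) volume 0 1 := ((slicet (cB hφ) t).mul (slicet (cM hφ) t)).intervalIntegrable (μ := volume) (0:ℝ) 1
    have hksplit : (∫ x in (0:ℝ)..1,
        (pB φ t x * pM φ t x - φ t x * |φ t x| ^ (p - 1) * pA φ t x))
        = - (∫ x in (0:ℝ)..1, pC φ t x * pA φ t x)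
          - ∫ x in (0:ℝ)..1, φ t x * |φ t x| ^ (p - 1) * pA φ t x := by
      rw [intervalIntegral.integral_sub intBM intgA, ibp, hbd0, hbd1]
      ring
    -- the square trick
    have key : 0 ≤ (1/4) * (∫ x in (0:ℝ)..1,
          (pA φ t x - (pC φ t x + φ t x * |φ t x| ^ (p - 1))) ^ 2)
        + ((∫ x in (0:ℝ)..1, pC φ t x * pA φ t x)
          + ∫ x in (0:ℝ)..1, φ t x * |φ t x| ^ (p - 1) * pA φ t x) := by
      have e1 : (1/4) * (∫ x in (0:ℝ)..1,
            (pA φ t x - (pC φ t x + φ t x * |φ t x| ^ (p - 1))) ^ 2)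
          + ((∫ x in (0:ℝ)..1, pC φ t x * pA φ t x)
            + ∫ x in (0:ℝ)..1, φ t x * |φ t x| ^ (p - 1) * pA φ t x)
          = ∫ x in (0:ℝ)..1,
              ((1/4) * (pA φ t x - (pC φ t x + φ t x * |φ t x| ^ (p - 1))) ^ 2
                + (pC φ t x * pA φ t x + φ t x * |φ t x| ^ (p - 1) * pA φ t x)) := by
        rw [intervalIntegral.integral_add]
        · rw [intervalIntegral.integral_const_mul,
            intervalIntegral.integral_add intCA intgA]
        · exact (continuous_const.mul ((slicet csq t))).intervalIntegrable _ _
        · exact (intCA.add intgA)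
      rw [e1]
      have e2 : ∀ x : ℝ,
          (1/4) * (pA φ t x - (pC φ t x + φ t x * |φ t x| ^ (p - 1))) ^ 2
            + (pC φ t x * pA φ t x + φ t x * |φ t x| ^ (p - 1) * pA φ t x)
          = (1/4) * (pA φ t x + (pC φ t x + φ t x * |φ t x| ^ (p - 1))) ^ 2 := by
        intro x; ring
      rw [intervalIntegral.integral_congr fun x _ => e2 x]
      apply intervalIntegral.integral_nonneg (zero_le_one' ℝ)
      intro x _; positivity
    linarith [hksplit, key]
  -- Step 5 : integrate the inequality in t
  have cK : Continuous fun t : ℝ => ∫ x in (0:ℝ)..1,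
      (pB φ t x * pM φ t x - φ t x * |φ t x| ^ (p - 1) * pA φ t x) :=
    intervalIntegral.continuous_parametric_intervalIntegral_of_continuous'
      (f := fun t x => pB φ t x * pM φ t x - φ t x * |φ t x| ^ (p - 1) * pA φ t x)
      (by simpa [Function.uncurry_def] using ck) 0 1
  have cQ : Continuous fun t : ℝ => ∫ x in (0:ℝ)..1,
      (pA φ t x - (pC φ t x + φ t x * |φ t x| ^ (p - 1))) ^ 2 :=
    intervalIntegral.continuous_parametric_intervalIntegral_of_continuous'
      (f := fun t x => (pA φ t x - (pC φ t x + φ t x * |φ t x| ^ (p - 1))) ^ 2)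
      (by simpa [Function.uncurry_def] using csq) 0 1
  have step5 : (∫ t in (0:ℝ)..T', ∫ x in (0:ℝ)..1,
        (pB φ t x * pM φ t x - φ t x * |φ t x| ^ (p - 1) * pA φ t x))
      ≤ ∫ t in (0:ℝ)..T', (1/4) * ∫ x in (0:ℝ)..1,
        (pA φ t x - (pC φ t x + φ t x * |φ t x| ^ (p - 1))) ^ 2 := by
    apply intervalIntegral.integral_mono_ae_restrict hT'0
      (cK.intervalIntegrable _ _) ((continuous_const.mul cQ).intervalIntegrable _ _)
    rw [← Measure.restrict_congr_set Ioo_ae_eq_Icc]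
    exact ae_restrict_of_forall_mem measurableSet_Ioo step4
  rw [step2, step3, ← intervalIntegral.integral_const_mul]
  exact step5

/-- The large deviations rate of any smooth Dirichlet path `φ` on `[0,T]` is bounded below
by `2 (S(φ(T',·)) − S(φ(0,·)))` for every `T' ∈ [0,T]`, hence by twice the supremum of the
potential increments. -/
theorem stmt3 (p T : ℝ) (hp : 1 < p) (hT : 0 < T) (φ : ℝ → ℝ → ℝ)
    (hφ : ContDiff ℝ 2 (fun q : ℝ × ℝ => φ q.1 q.2))
    (hbc : ∀ t ∈ Icc (0:ℝ) T, φ t 0 = 0 ∧ φ t 1 = 0) :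
    (∀ T' ∈ Icc (0:ℝ) T,
      2 * (potS p (φ T') - potS p (φ 0)) ≤
        (1/2) * ∫ t in (0:ℝ)..T', ∫ x in (0:ℝ)..1,
          (deriv (fun s => φ s x) t - deriv (deriv (φ t)) x
            - φ t x * |φ t x| ^ (p - 1)) ^ 2) ∧
    2 * sSup ((fun T' => potS p (φ T') - potS p (φ 0)) '' Icc (0:ℝ) T) ≤
      (1/2) * ∫ t in (0:ℝ)..T, ∫ x in (0:ℝ)..1,
        (deriv (fun s => φ s x) t - deriv (deriv (φ t)) x
          - φ t x * |φ t x| ^ (p - 1)) ^ 2 := by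
  have hAeq : ∀ t x : ℝ, deriv (fun s => φ s x) t = pA φ t x :=
    fun t x => (hderiv_t hφ t x).deriv
  have hBeq : ∀ t : ℝ, deriv (φ t) = fun x => pB φ t x :=
    fun t => funext fun x => (hderiv_x hφ t x).deriv
  have hCeq : ∀ t x : ℝ, deriv (deriv (φ t)) x = pC φ t x := by
    intro t x; rw [hBeq t]; exact (hderiv_Bx hφ t x).deriv
  have hsub : ∀ t x : ℝ, pA φ t x - pC φ t x - φ t x * |φ t x| ^ (p - 1)
      = pA φ t x - (pC φ t x + φ t x * |φ t x| ^ (p - 1)) :=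
    fun t x => sub_sub _ _ _
  simp only [hAeq, hCeq, hsub]
  -- continuity of the inner integral
  have cφ : Continuous fun q : ℝ × ℝ => φ q.1 q.2 := hφ.continuous
  have cg : Continuous fun q : ℝ × ℝ => φ q.1 q.2 * |φ q.1 q.2| ^ (p - 1) :=
    cφ.mul ((cφ.abs).rpow_const fun q => Or.inr (by linarith))
  have csq : Continuous fun q : ℝ × ℝ =>
      (pA φ q.1 q.2 - (pC φ q.1 q.2 + φ q.1 q.2 * |φ q.1 q.2| ^ (p - 1))) ^ 2 :=
    (((cA hφ).sub ((cC hφ).add cg)).pow 2)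
  have cQ : Continuous fun t : ℝ => ∫ x in (0:ℝ)..1,
      (pA φ t x - (pC φ t x + φ t x * |φ t x| ^ (p - 1))) ^ 2 :=
    intervalIntegral.continuous_parametric_intervalIntegral_of_continuous'
      (f := fun t x => (pA φ t x - (pC φ t x + φ t x * |φ t x| ^ (p - 1))) ^ 2)
      (by simpa [Function.uncurry_def] using csq) 0 1
  have hQnn : ∀ t : ℝ, 0 ≤ ∫ x in (0:ℝ)..1,
      (pA φ t x - (pC φ t x + φ t x * |φ t x| ^ (p - 1))) ^ 2 :=
    fun t => intervalIntegral.integral_nonneg (zero_le_one' ℝ) fun x _ => sq_nonneg _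
  have bound : ∀ T' ∈ Icc (0:ℝ) T, potS p (φ T') - potS p (φ 0) ≤
      (1/4) * ∫ t in (0:ℝ)..T, ∫ x in (0:ℝ)..1,
        (pA φ t x - (pC φ t x + φ t x * |φ t x| ^ (p - 1))) ^ 2 := by
    intro T' hT'
    refine (stmt3_key p T hp hT φ hφ hbc T' hT').trans ?_
    have mono : (∫ t in (0:ℝ)..T', ∫ x in (0:ℝ)..1,
          (pA φ t x - (pC φ t x + φ t x * |φ t x| ^ (p - 1))) ^ 2)
        ≤ ∫ t in (0:ℝ)..T, ∫ x in (0:ℝ)..1,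
          (pA φ t x - (pC φ t x + φ t x * |φ t x| ^ (p - 1))) ^ 2 :=
      intervalIntegral.integral_mono_interval le_rfl hT'.1 hT'.2
        (Filter.Eventually.of_forall fun t => hQnn t)
        (cQ.intervalIntegrable _ _)
    linarith
  have hInn : 0 ≤ ∫ t in (0:ℝ)..T, ∫ x in (0:ℝ)..1,
      (pA φ t x - (pC φ t x + φ t x * |φ t x| ^ (p - 1))) ^ 2 :=
    intervalIntegral.integral_nonneg hT.le fun t _ => hQnn t
  constructor
  · intro T' hT'
    have := stmt3_key p T hp hT φ hφ hbc T' hT'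
    linarith
  · have h1 : sSup ((fun T' => potS p (φ T') - potS p (φ 0)) '' Icc (0:ℝ) T)
        ≤ (1/4) * ∫ t in (0:ℝ)..T, ∫ x in (0:ℝ)..1,
          (pA φ t x - (pC φ t x + φ t x * |φ t x| ^ (p - 1))) ^ 2 := by
      apply Real.sSup_le
      · rintro y ⟨T', hT', rfl⟩
        exact bound T' hT'
      · linarith
    linarith
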